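/- Suppose the stochastic kernel R′(dy|z,a) on Y given P(X)×A is setwise continuous and H is a stochastic kernel on X given P(X)×A×Y satisfying the disintegration identity (3.4) and Assumption (H). Then the stochastic kernel q on P(X) given P(X)×A, defined by q(D|z,a) = ∫_Y 1{H(z,a,y) ∈ D} R′(dy|z,a) for Borel D ⊆ P(X), is weakly continuous: whenever z⁽ⁿ⁾ → z weakly and a⁽ⁿ⁾ → a, q(·|z⁽ⁿ⁾,a⁽ⁿ⁾) → q(·|z,a) weakly in P(P(X)). -/

import Mathlib

open MeasureTheory Filter Topology
open scoped ENNReal NNReal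

/-- The joint kernel `R(B×C|z,a) = ∫_X ∫_B Q(C|a,x') P(dx'|x,a) z(dx)` of formula (3.3). -/
noncomputable def Rfun {X Y A : Type*} [MeasurableSpace X] [MeasurableSpace Y]
    (P : X × A → ProbabilityMeasure X) (Q : A × X → ProbabilityMeasure Y)
    (z : ProbabilityMeasure X) (a : A) (B : Set X) (C : Set Y) : ℝ≥0∞ :=
  ∫⁻ x, (∫⁻ x' in B, ((Q (a, x') : Measure Y) C) ∂((P (x, a) : Measure X))) ∂(z : Measure X)

/-- The marginal observation kernel `R'(dy|z,a)` on `Y` given `P(X)×A`, as a measure. -/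
noncomputable def RprimeM {X Y A : Type*} [MeasurableSpace X] [MeasurableSpace Y]
    (P : X × A → ProbabilityMeasure X) (Q : A × X → ProbabilityMeasure Y)
    (z : ProbabilityMeasure X) (a : A) : Measure Y :=
  ((z : Measure X).bind fun x => (P (x, a) : Measure X)).bind fun x' => (Q (a, x') : Measure Y)

/-- The disintegration identity (3.4). -/
def Disint {X Y A : Type*} [MeasurableSpace X] [MeasurableSpace Y]
    (P : X × A → ProbabilityMeasure X) (Q : A × X → ProbabilityMeasure Y)
    (H : ProbabilityMeasure X × A × Y → ProbabilityMeasure X) : Prop :=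
  ∀ (z : ProbabilityMeasure X) (a : A) (B : Set X) (C : Set Y),
    MeasurableSet B → MeasurableSet C →
      Rfun P Q z a B C = ∫⁻ y in C, ((H (z, a, y) : Measure X) B) ∂(RprimeM P Q z a)

/-- Assumption (H): along any weakly convergent sequence `z⁽ⁿ⁾ → z`, `a⁽ⁿ⁾ → a` there is a
subsequence and a Borel set `C ⊆ Y` of full `R'(·|z,a)`-measure on which
`H(z⁽ⁿᵏ⁾,a⁽ⁿᵏ⁾,y) → H(z,a,y)` weakly. -/
def AssumptionH {X Y A : Type*}
    [MeasurableSpace X] [TopologicalSpace X] [MeasurableSpace Y] [TopologicalSpace A]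
    [OpensMeasurableSpace X]
    (P : X × A → ProbabilityMeasure X) (Q : A × X → ProbabilityMeasure Y)
    (H : ProbabilityMeasure X × A × Y → ProbabilityMeasure X) : Prop :=
  ∀ (zs : ℕ → ProbabilityMeasure X) (z : ProbabilityMeasure X) (as : ℕ → A) (a : A),
    Tendsto zs atTop (𝓝 z) → Tendsto as atTop (𝓝 a) →
    ∃ φ : ℕ → ℕ, StrictMono φ ∧ ∃ C : Set Y, MeasurableSet C ∧
      RprimeM P Q z a C = 1 ∧
      ∀ y ∈ C, Tendsto (fun k => H (zs (φ k), as (φ k), y)) atTop (𝓝 (H (z, a, y)))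

/-- The Borel σ-algebra of the weak topology on `P(X)`. -/
noncomputable instance probabilityMeasureMeasurableSpace {X : Type*}
    [MeasurableSpace X] [TopologicalSpace X] [OpensMeasurableSpace X] :
    MeasurableSpace (ProbabilityMeasure X) := borel _

/-- The transition kernel `q(D|z,a) = ∫_Y 1{H(z,a,y) ∈ D} R'(dy|z,a)` of the COMDP,
i.e. the image of `R'(·|z,a)` under `y ↦ H(z,a,y)`. -/
noncomputable def qker {X Y A : Type*}
    [MeasurableSpace X] [TopologicalSpace X] [OpensMeasurableSpace X] [MeasurableSpace Y]
    (P : X × A → ProbabilityMeasure X) (Q : A × X → ProbabilityMeasure Y)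
    (H : ProbabilityMeasure X × A × Y → ProbabilityMeasure X)
    (z : ProbabilityMeasure X) (a : A) : Measure (ProbabilityMeasure X) :=
  (RprimeM P Q z a).map fun y => H (z, a, y)

section AuxSetwise

open Filter MeasureTheory

variable {Y : Type*} [MeasurableSpace Y]

lemma aux_integrable_of_abs_le (ν : Measure Y) [IsProbabilityMeasure ν]
    (h : Y → ℝ) (hm : Measurable h) (M : ℝ) (hb : ∀ y, |h y| ≤ M) :
    Integrable h ν :=
  (integrable_const M).mono' hm.aestronglyMeasurable
    (Filter.Eventually.of_forall fun y => by simpa [Real.norm_eq_abs] using hb y)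

lemma aux_setwise_integral_tendsto_nonneg
    (μs : ℕ → Measure Y) (μ : Measure Y)
    [∀ n, IsProbabilityMeasure (μs n)] [IsProbabilityMeasure μ]
    (hsw : ∀ C : Set Y, MeasurableSet C → Tendsto (fun n => μs n C) atTop (𝓝 (μ C)))
    (h : Y → ℝ) (hm : Measurable h) (M : ℝ) (h0 : ∀ y, 0 ≤ h y) (hb : ∀ y, h y ≤ M) :
    Tendsto (fun n => ∫ y, h y ∂(μs n)) atTop (𝓝 (∫ y, h y ∂μ)) := by
  have key : ∀ ν : Measure Y, IsProbabilityMeasure ν →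
      ∫ y, h y ∂ν = (∫⁻ t in Set.Ioi (0:ℝ), ν {a | t < h a}).toReal := by
    intro ν hν
    rw [integral_eq_lintegral_of_nonneg_ae (Filter.Eventually.of_forall h0)
      hm.aestronglyMeasurable, lintegral_eq_lintegral_meas_lt ν
      (Filter.Eventually.of_forall h0) hm.aemeasurable]
  set bound : ℝ → ℝ≥0∞ := (Set.Ioc (0:ℝ) M).indicator fun _ => (1:ℝ≥0∞) with hbdef
  have hFle : ∀ ν : Measure Y, IsProbabilityMeasure ν →
      ∀ᵐ t ∂(volume.restrict (Set.Ioi (0:ℝ))), ν {a | t < h a} ≤ bound t := by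
    intro ν hν
    rw [ae_restrict_iff' measurableSet_Ioi]
    refine Filter.Eventually.of_forall fun t ht => ?_
    by_cases htM : t ≤ M
    · have hbt : bound t = 1 := Set.indicator_of_mem (Set.mem_Ioc.2 ⟨Set.mem_Ioi.1 ht, htM⟩) _
      rw [hbt]; exact prob_le_one
    · have hempty : {a | t < h a} = ∅ := by
        ext a
        simp only [Set.mem_setOf_eq, Set.mem_empty_iff_false, iff_false, not_lt]
        exact (hb a).trans (le_of_not_ge htM)
      simp [hempty]
  have hbound_ne_top : ∫⁻ t in Set.Ioi (0:ℝ), bound t ≠ ⊤ := by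
    rw [hbdef, lintegral_indicator measurableSet_Ioc _, setLIntegral_one]
    refine ne_of_lt (lt_of_le_of_lt ?_ (?_ : volume (Set.Ioc (0:ℝ) M) < ⊤))
    · rw [Measure.restrict_apply measurableSet_Ioc]
      exact measure_mono Set.inter_subset_left
    · rw [Real.volume_Ioc]
      exact ENNReal.ofReal_lt_top
  have hDCT : Tendsto (fun n => ∫⁻ t in Set.Ioi (0:ℝ), μs n {a | t < h a}) atTop
      (𝓝 (∫⁻ t in Set.Ioi (0:ℝ), μ {a | t < h a})) := by
    refine tendsto_lintegral_of_dominated_convergence bound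
      (fun n => Antitone.measurable fun s t hst =>
        measure_mono fun a ha => lt_of_le_of_lt hst ha) (fun n => hFle (μs n) inferInstance)
      hbound_ne_top ?_
    exact Filter.Eventually.of_forall fun t => hsw _ (measurableSet_lt measurable_const hm)
  have hfin : ∫⁻ t in Set.Ioi (0:ℝ), μ {a | t < h a} ≠ ⊤ :=
    ((lintegral_mono_ae (hFle μ inferInstance)).trans_lt
      (lt_top_iff_ne_top.2 hbound_ne_top)).ne
  have hcomp := (ENNReal.tendsto_toReal hfin).comp hDCT
  have e : (fun n => ∫ y, h y ∂(μs n)) =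
      fun n => (∫⁻ t in Set.Ioi (0:ℝ), μs n {a | t < h a}).toReal :=
    funext fun n => key (μs n) inferInstance
  rw [e, key μ inferInstance]
  exact hcomp

lemma aux_setwise_integral_tendsto
    (μs : ℕ → Measure Y) (μ : Measure Y)
    [∀ n, IsProbabilityMeasure (μs n)] [IsProbabilityMeasure μ]
    (hsw : ∀ C : Set Y, MeasurableSet C → Tendsto (fun n => μs n C) atTop (𝓝 (μ C)))
    (h : Y → ℝ) (hm : Measurable h) (M : ℝ) (hb : ∀ y, |h y| ≤ M) :
    Tendsto (fun n => ∫ y, h y ∂(μs n)) atTop (𝓝 (∫ y, h y ∂μ)) := by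
  have h0 : ∀ y, 0 ≤ h y + M := fun y => by have := abs_le.1 (hb y); linarith
  have h2 : ∀ y, h y + M ≤ M + M := fun y => by have := abs_le.1 (hb y); linarith
  have key : ∀ ν : Measure Y, IsProbabilityMeasure ν →
      ∫ y, (h y + M) ∂ν = (∫ y, h y ∂ν) + M := by
    intro ν hν
    rw [integral_add (aux_integrable_of_abs_le ν h hm M hb) (integrable_const M),
      integral_const]
    simp
  have hmain := (aux_setwise_integral_tendsto_nonneg μs μ hsw (fun y => h y + M)
    (hm.add_const M) (M + M) h0 h2).sub_const M
  have e : (fun n => (∫ y, (h y + M) ∂(μs n)) - M) = fun n => ∫ y, h y ∂(μs n) :=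
    funext fun n => by rw [key (μs n) inferInstance]; ring
  rw [e, key μ inferInstance, add_sub_cancel_right] at hmain
  exact hmain

lemma aux_setwise_integral_tendsto_of_ae_tendsto
    (μs : ℕ → Measure Y) (μ : Measure Y)
    [∀ n, IsProbabilityMeasure (μs n)] [IsProbabilityMeasure μ]
    (hsw : ∀ C : Set Y, MeasurableSet C → Tendsto (fun n => μs n C) atTop (𝓝 (μ C)))
    (g : ℕ → Y → ℝ) (G : Y → ℝ) (hgm : ∀ n, Measurable (g n)) (hGm : Measurable G)
    (M : ℝ) (hM0 : 0 ≤ M) (hgb : ∀ n y, |g n y| ≤ M) (hGb : ∀ y, |G y| ≤ M)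
    (hae : ∀ᵐ y ∂μ, Tendsto (fun n => g n y) atTop (𝓝 (G y))) :
    Tendsto (fun n => ∫ y, g n y ∂(μs n)) atTop (𝓝 (∫ y, G y ∂μ)) := by
  rw [Metric.tendsto_atTop]
  intro ε hε
  set δ : ℝ := ε / (16 * (M + 1)) with hδdef
  have hδ : 0 < δ := by positivity
  have hδval : 16 * (M + 1) * δ = ε := by
    rw [hδdef]; field_simp
  obtain ⟨t, htm, htμ, hunif⟩ := tendstoUniformlyOn_of_ae_tendsto'
    (fun n => (hgm n).stronglyMeasurable) hGm.stronglyMeasurable hae hδ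
  have hG := aux_setwise_integral_tendsto μs μ hsw G hGm M hGb
  have ev1 : ∀ᶠ n in atTop, dist (∫ y, G y ∂(μs n)) (∫ y, G y ∂μ) < ε/4 :=
    hG (Metric.ball_mem_nhds _ (by positivity))
  have htlt : μ t < ENNReal.ofReal (2*δ) :=
    lt_of_le_of_lt htμ (by rw [ENNReal.ofReal_lt_ofReal_iff (by positivity)]; linarith)
  have ev2 : ∀ᶠ n in atTop, μs n t < ENNReal.ofReal (2*δ) :=
    (hsw t htm).eventually_lt_const htlt
  have ev3 := Metric.tendstoUniformlyOn_iff.1 hunif (ε/4) (by positivity)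
  have hall := (ev1.and ev2).and ev3
  rw [eventually_atTop] at hall
  obtain ⟨N, hN⟩ := hall
  refine ⟨N, fun n hn => ?_⟩
  obtain ⟨⟨h1, h2⟩, h3⟩ := hN n hn
  have ign : Integrable (g n) (μs n) := aux_integrable_of_abs_le _ _ (hgm n) M (hgb n)
  have iGn : Integrable G (μs n) := aux_integrable_of_abs_le _ _ hGm M hGb
  set In := ∫ y, g n y ∂(μs n) with hIn
  set IGn := ∫ y, G y ∂(μs n) with hIGn
  set IG := ∫ y, G y ∂μ with hIG
  set St := ∫ y in t, (g n y - G y) ∂(μs n) with hSt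
  set Sc := ∫ y in tᶜ, (g n y - G y) ∂(μs n) with hSc
  have e2 : St + Sc = ∫ y, (g n y - G y) ∂(μs n) := integral_add_compl htm (ign.sub iGn)
  have e3 : ∫ y, (g n y - G y) ∂(μs n) = In - IGn := integral_sub ign iGn
  have e4 : In - IGn = St + Sc := (e2.trans e3).symm
  -- bound on t
  have h2δle : (μs n t).toReal ≤ 2*δ := by
    have := (ENNReal.toReal_le_toReal (measure_ne_top _ _) ENNReal.ofReal_ne_top).2 h2.le
    rwa [ENNReal.toReal_ofReal (by positivity)] at this
  have hAbound : |St| ≤ (2*M) * (μs n t).toReal := by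
    rw [← Real.norm_eq_abs]
    refine norm_setIntegral_le_of_norm_le_const_ae' (measure_lt_top _ _)
      (Filter.Eventually.of_forall fun y _ => ?_)
    calc ‖g n y - G y‖ ≤ ‖g n y‖ + ‖G y‖ := norm_sub_le _ _
      _ ≤ M + M := by
          rw [Real.norm_eq_abs, Real.norm_eq_abs]
          exact add_le_add (hgb n y) (hGb y)
      _ = 2*M := by ring
  have hA : |St| ≤ ε/4 := by
    refine hAbound.trans ?_
    have hstep : (2*M) * (μs n t).toReal ≤ (2*M) * (2*δ) :=
      mul_le_mul_of_nonneg_left h2δle (by linarith)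
    refine hstep.trans ?_
    nlinarith [hδval, hδ]
  -- bound on tᶜ
  have hBbound : |Sc| ≤ (ε/4) * (μs n tᶜ).toReal := by
    rw [← Real.norm_eq_abs]
    refine norm_setIntegral_le_of_norm_le_const_ae' (measure_lt_top _ _)
      (Filter.Eventually.of_forall fun y hy => ?_)
    have := h3 y hy
    rw [Real.norm_eq_abs, ← Real.dist_eq, dist_comm]
    exact this.le
  have hB : |Sc| ≤ ε/4 := by
    refine hBbound.trans ?_
    have h1' : (μs n tᶜ).toReal ≤ 1 := by
      have := (ENNReal.toReal_le_toReal (measure_ne_top _ _) ENNReal.one_ne_top).2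
        (prob_le_one (μ := μs n) (s := tᶜ))
      simpa using this
    calc (ε/4) * (μs n tᶜ).toReal ≤ (ε/4) * 1 :=
          mul_le_mul_of_nonneg_left h1' (by positivity)
      _ = ε/4 := by ring
  have hGdist : |IGn - IG| < ε/4 := by rwa [Real.dist_eq] at h1
  have htriangle : |In - IG| ≤ |In - IGn| + |IGn - IG| := abs_sub_le _ _ _
  have hsplit : |In - IGn| ≤ |St| + |Sc| := by rw [e4]; exact abs_add_le _ _
  rw [Real.dist_eq]
  calc |In - IG| ≤ |In - IGn| + |IGn - IG| := htriangle
    _ ≤ (|St| + |Sc|) + |IGn - IG| := by linarith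
    _ < ε := by linarith

end AuxSetwise

/-- **Theorem (weak continuity of `q` under setwise continuity of `R'` and Assumption (H)).**
If the kernel `R'(dy|z,a)` is setwise continuous and `H` is a stochastic kernel satisfying
the disintegration identity (3.4) and Assumption (H), then the kernel `q` on `P(X)` given
`P(X)×A` is weakly continuous. -/
theorem qker_weakly_continuous_of_setwise_and_assumptionH {X Y A : Type*}
    [MetricSpace X] [SecondCountableTopology X] [MeasurableSpace X] [BorelSpace X]
    [MetricSpace Y] [SecondCountableTopology Y] [MeasurableSpace Y] [BorelSpace Y]
    [MetricSpace A] [SecondCountableTopology A] [MeasurableSpace A] [BorelSpace A]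
    (P : X × A → ProbabilityMeasure X) (Q : A × X → ProbabilityMeasure Y)
    (hPmeas : Measurable fun p => (P p : Measure X))
    (hQmeas : Measurable fun p => (Q p : Measure Y))
    (hR'setwise : ∀ (zs : ℕ → ProbabilityMeasure X) (z : ProbabilityMeasure X)
        (as : ℕ → A) (a : A),
      Tendsto zs atTop (𝓝 z) → Tendsto as atTop (𝓝 a) →
      ∀ C : Set Y, MeasurableSet C →
        Tendsto (fun n => RprimeM P Q (zs n) (as n) C) atTop (𝓝 (RprimeM P Q z a C)))
    (H : ProbabilityMeasure X × A × Y → ProbabilityMeasure X)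
    (hHmeas : Measurable H)
    (hHdis : Disint P Q H)
    (hH : AssumptionH P Q H) :
    ∀ (zs : ℕ → ProbabilityMeasure X) (z : ProbabilityMeasure X) (as : ℕ → A) (a : A),
      Tendsto zs atTop (𝓝 z) → Tendsto as atTop (𝓝 a) →
      ∀ f : BoundedContinuousFunction (ProbabilityMeasure X) ℝ,
        Tendsto (fun n => ∫ ζ, f ζ ∂(qker P Q H (zs n) (as n))) atTop
          (𝓝 (∫ ζ, f ζ ∂(qker P Q H z a))) := by
  
  have hprob : ∀ (z' : ProbabilityMeasure X) (a' : A),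
      IsProbabilityMeasure (RprimeM P Q z' a') := by
    intro z' a'
    have hP : Measurable fun x => (P (x, a') : Measure X) :=
      hPmeas.comp measurable_prodMk_right
    have hQ : Measurable fun x' => (Q (a', x') : Measure Y) :=
      hQmeas.comp measurable_prodMk_left
    constructor
    rw [RprimeM, Measure.bind_apply MeasurableSet.univ hQ.aemeasurable]
    simp only [measure_univ, lintegral_one]
    rw [Measure.bind_apply MeasurableSet.univ hP.aemeasurable]
    simp only [measure_univ, lintegral_one]
  intro zs z as a hz ha f
  haveI : BorelSpace (ProbabilityMeasure X) := ⟨rfl⟩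
  have hHy : ∀ (z' : ProbabilityMeasure X) (a' : A), Measurable fun y => H (z', a', y) :=
    fun z' a' => hHmeas.comp (measurable_const.prodMk (measurable_const.prodMk measurable_id))
  have hmap : ∀ (z' : ProbabilityMeasure X) (a' : A),
      ∫ ζ, f ζ ∂(qker P Q H z' a') = ∫ y, f (H (z', a', y)) ∂(RprimeM P Q z' a') := by
    intro z' a'
    rw [qker]
    exact integral_map (hHy z' a').aemeasurable f.continuous.aestronglyMeasurable
  apply tendsto_of_subseq_tendsto
  intro ns hns
  obtain ⟨φ, hφ, C, hCm, hC1, hCc⟩ := hH (fun n => zs (ns n)) z (fun n => as (ns n)) a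
    (hz.comp hns) (ha.comp hns)
  refine ⟨φ, ?_⟩
  haveI := hprob z a
  haveI : ∀ k, IsProbabilityMeasure (RprimeM P Q (zs (ns (φ k))) (as (ns (φ k)))) :=
    fun k => hprob _ _
  simp only [hmap]
  have hsw : ∀ D : Set Y, MeasurableSet D →
      Tendsto (fun k => RprimeM P Q (zs (ns (φ k))) (as (ns (φ k))) D) atTop
        (𝓝 (RprimeM P Q z a D)) :=
    hR'setwise (fun k => zs (ns (φ k))) z (fun k => as (ns (φ k))) a
      ((hz.comp hns).comp hφ.tendsto_atTop) ((ha.comp hns).comp hφ.tendsto_atTop)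
  have hCnull : RprimeM P Q z a Cᶜ = 0 := by
    rw [measure_compl hCm (measure_ne_top _ _), measure_univ, hC1, tsub_self]
  have hae : ∀ᵐ y ∂(RprimeM P Q z a),
      Tendsto (fun k => f (H (zs (ns (φ k)), as (ns (φ k)), y))) atTop
        (𝓝 (f (H (z, a, y)))) := by
    have hmem : ∀ᵐ y ∂(RprimeM P Q z a), y ∈ C := by
      rw [ae_iff]
      exact hCnull
    filter_upwards [hmem] with y hy
    exact (f.continuous.tendsto _).comp (hCc y hy)
  exact aux_setwise_integral_tendsto_of_ae_tendsto _ _ hsw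
    (fun k y => f (H (zs (ns (φ k)), as (ns (φ k)), y))) (fun y => f (H (z, a, y)))
    (fun k => f.continuous.measurable.comp (hHy _ _)) (f.continuous.measurable.comp (hHy _ _))
    ‖f‖ (norm_nonneg f)
    (fun k y => by rw [← Real.norm_eq_abs]; exact f.norm_coe_le_norm _)
    (fun y => by rw [← Real.norm_eq_abs]; exact f.norm_coe_le_norm _)
    hae
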